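/- Let p > 1 and let u be the unique minimizer of G. Suppose for some indices the minimizer satisfies u_{i-1} < u_i = u_{i+1} = … = u_{i+r} < u_{i+r+1} (a plateau with value ū strictly between its neighbors). Then ū minimizes c ↦ Σ_{j=i}^{i+r} L_j |c - f_j|^p over c ∈ (u_{i-1}, u_{i+r+1}). -/
import Mathlib


/-- Predecessor index: `i - 1` (and `0` maps to `0`). -/
def pred {k : ℕ} (i : Fin k) : Fin k :=
  ⟨i.val - 1, Nat.lt_of_le_of_lt (Nat.sub_le _ _) i.isLt⟩

/-- The discrete energy `G(v) = ∑_{i≥2} |v_i - v_{i-1}| + λ ∑_i L_i |f_i - v_i|^p`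
(indices written with `Fin k`, i.e. `0,…,k-1`). -/
noncomputable def G (k : ℕ) (lam p : ℝ) (L f : Fin k → ℝ) (v : Fin k → ℝ) : ℝ :=
  (∑ i : Fin k, if i.val = 0 then 0 else |v i - v (pred i)|) +
    lam * ∑ i : Fin k, L i * |f i - v i| ^ p

/-- if the minimizer has a plateau `u_{i-1} < u_i = … = u_{i+r} < u_{i+r+1}`
with common value `ū`, then `ū` minimizes `c ↦ ∑_{j=i}^{i+r} L_j |c - f_j|^p` over
`(u_{i-1}, u_{i+r+1})`. (Indices here are `0`-based.) -/
theorem stmt13 (k : ℕ) (lam p : ℝ) (hlam : 0 < lam) (hp : 1 < p)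
    (L f : Fin k → ℝ) (hL : ∀ i, 0 < L i)
    (u : Fin k → ℝ) (hu : ∀ v : Fin k → ℝ, G k lam p L f u ≤ G k lam p L f v)
    (i r : ℕ) (hi : 0 < i) (hir : i + r + 1 < k) (ubar : ℝ)
    (hplateau : ∀ j (_h1 : i ≤ j) (_h2 : j ≤ i + r), u ⟨j, by omega⟩ = ubar)
    (hleft : u ⟨i - 1, by omega⟩ < ubar)
    (hright : ubar < u ⟨i + r + 1, hir⟩) :
    ∀ c : ℝ, u ⟨i - 1, by omega⟩ < c → c < u ⟨i + r + 1, hir⟩ →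
      (∑ j ∈ Finset.univ.filter (fun j : Fin k => i ≤ j.val ∧ j.val ≤ i + r),
          L j * |ubar - f j| ^ p) ≤
        ∑ j ∈ Finset.univ.filter (fun j : Fin k => i ≤ j.val ∧ j.val ≤ i + r),
          L j * |c - f j| ^ p := by
  intro c hc1 hc2
  classical
  set a : ℝ := u ⟨i - 1, by omega⟩ with ha
  set b : ℝ := u ⟨i + r + 1, hir⟩ with hb
  set ji : Fin k := ⟨i, by omega⟩ with hji
  set jr : Fin k := ⟨i + r + 1, hir⟩ with hjr
  set v : Fin k → ℝ := fun j => if i ≤ j.val ∧ j.val ≤ i + r then c else u j with hv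
  have huplat : ∀ j : Fin k, i ≤ j.val → j.val ≤ i + r → u j = ubar := by
    intro j h1 h2
    have := hplateau j.val h1 h2
    simpa using this
  have key := hu v
  unfold G at key
  -- total variation terms agree
  have hTV : (∑ j : Fin k, if j.val = 0 then 0 else |v j - v (pred j)|)
      = (∑ j : Fin k, if j.val = 0 then 0 else |u j - u (pred j)|) := by
    have hsum : ∑ j : Fin k,
        ((if j.val = 0 then 0 else |v j - v (pred j)|) -
         (if j.val = 0 then 0 else |u j - u (pred j)|))
        = ∑ j ∈ ({ji, jr} : Finset (Fin k)),
        ((if j.val = 0 then 0 else |v j - v (pred j)|) -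
         (if j.val = 0 then 0 else |u j - u (pred j)|)) := by
      refine (Finset.sum_subset (Finset.subset_univ _) ?_).symm
      intro x _ hx
      have hx1 : x.val ≠ i := by
        intro h; exact hx (by simp [hji]; left; exact Fin.ext h)
      have hx2 : x.val ≠ i + r + 1 := by
        intro h; exact hx (by simp [hjr]; right; exact Fin.ext h)
      by_cases h0 : x.val = 0
      · simp [h0]
      · simp only [if_neg h0]
        by_cases hin : i ≤ x.val ∧ x.val ≤ i + r
        · -- interior plateau point, x.val > i
          have hxi : i < x.val := lt_of_le_of_ne hin.1 (Ne.symm hx1)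
          have hpin : i ≤ (pred x).val ∧ (pred x).val ≤ i + r := by
            simp only [pred]; omega
          have h1 : v x = c := by simp [hv, hin]
          have h2 : v (pred x) = c := by simp [hv, hpin]
          have h3 : u x = ubar := huplat x hin.1 hin.2
          have h4 : u (pred x) = ubar := huplat (pred x) hpin.1 hpin.2
          simp [h1, h2, h3, h4]
        · -- outside: x.val < i or x.val > i+r+1
          have hout : x.val < i ∨ i + r + 1 < x.val := by omega
          have hpout : ¬ (i ≤ (pred x).val ∧ (pred x).val ≤ i + r) := by
            simp only [pred]; omega
          have h1 : v x = u x := by simp only [hv]; rw [if_neg hin]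
          have h2 : v (pred x) = u (pred x) := by simp only [hv]; rw [if_neg hpout]
          simp [h1, h2]
    have hpair : ji ≠ jr := by
      simp [hji, hjr, Fin.ext_iff]; omega
    rw [Finset.sum_pair hpair] at hsum
    -- compute the two boundary differences
    have hji0 : ji.val ≠ 0 := by simp [hji]; omega
    have hjr0 : jr.val ≠ 0 := by simp [hjr]
    have hpji : pred ji = (⟨i - 1, by omega⟩ : Fin k) := by
      simp [pred, hji]
    have hpjr : pred jr = (⟨i + r, by omega⟩ : Fin k) := by
      simp [pred, hjr]
    have hvji : v ji = c := by simp [hv, hji]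
    have hvpji : v (pred ji) = a := by
      rw [hpji]; simp only [hv]
      rw [if_neg (by simp; omega)]
    have huji : u ji = ubar := huplat ji (by simp [hji]) (by simp [hji])
    have hupji : u (pred ji) = a := by rw [hpji]
    have hvjr : v jr = b := by
      simp only [hv]; rw [if_neg (by simp [hjr])]
    have hvpjr : v (pred jr) = c := by
      rw [hpjr]; simp only [hv]; rw [if_pos (by simp)]
    have hujr : u jr = b := rfl
    have hupjr : u (pred jr) = ubar := by
      rw [hpjr]; exact huplat _ (by simp) (by simp)
    rw [if_neg hji0, if_neg hji0, if_neg hjr0, if_neg hjr0, hvji, hvpji, huji, hupji,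
      hvjr, hvpjr, hujr, hupjr] at hsum
    rw [abs_of_pos (by linarith), abs_of_pos (by linarith),
      abs_of_pos (by linarith), abs_of_pos (by linarith)] at hsum
    have : ∑ j : Fin k,
        ((if j.val = 0 then 0 else |v j - v (pred j)|) -
         (if j.val = 0 then 0 else |u j - u (pred j)|)) = 0 := by
      rw [hsum]; ring
    rw [Finset.sum_sub_distrib] at this
    linarith
  rw [hTV] at key
  have key2 : (∑ j : Fin k, L j * |f j - u j| ^ p)
      ≤ ∑ j : Fin k, L j * |f j - v j| ^ p := by
    have := (add_le_add_iff_left _).mp key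
    exact le_of_mul_le_mul_left this hlam
  -- split both sums over the plateau filter
  have hsplitu := Finset.sum_filter_add_sum_filter_not Finset.univ
    (fun j : Fin k => i ≤ j.val ∧ j.val ≤ i + r) (fun j => L j * |f j - u j| ^ p)
  have hsplitv := Finset.sum_filter_add_sum_filter_not Finset.univ
    (fun j : Fin k => i ≤ j.val ∧ j.val ≤ i + r) (fun j => L j * |f j - v j| ^ p)
  have hsameout : (∑ j ∈ Finset.univ.filter (fun j : Fin k => ¬(i ≤ j.val ∧ j.val ≤ i + r)),
      L j * |f j - v j| ^ p)
      = ∑ j ∈ Finset.univ.filter (fun j : Fin k => ¬(i ≤ j.val ∧ j.val ≤ i + r)),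
      L j * |f j - u j| ^ p := by
    refine Finset.sum_congr rfl ?_
    intro x hx
    rw [Finset.mem_filter] at hx
    have : v x = u x := by simp only [hv]; rw [if_neg hx.2]
    rw [this]
  have honu : (∑ j ∈ Finset.univ.filter (fun j : Fin k => i ≤ j.val ∧ j.val ≤ i + r),
      L j * |f j - u j| ^ p)
      = ∑ j ∈ Finset.univ.filter (fun j : Fin k => i ≤ j.val ∧ j.val ≤ i + r),
      L j * |ubar - f j| ^ p := by
    refine Finset.sum_congr rfl ?_
    intro x hx
    rw [Finset.mem_filter] at hx
    rw [huplat x hx.2.1 hx.2.2, abs_sub_comm]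
  have honv : (∑ j ∈ Finset.univ.filter (fun j : Fin k => i ≤ j.val ∧ j.val ≤ i + r),
      L j * |f j - v j| ^ p)
      = ∑ j ∈ Finset.univ.filter (fun j : Fin k => i ≤ j.val ∧ j.val ≤ i + r),
      L j * |c - f j| ^ p := by
    refine Finset.sum_congr rfl ?_
    intro x hx
    rw [Finset.mem_filter] at hx
    have : v x = c := by simp [hv, hx.2]
    rw [this, abs_sub_comm]
  rw [← hsplitu, ← hsplitv, hsameout, honu, honv] at key2
  linarith
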